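/- Łukasiewicz logic satisfies P2 over its standard algebra: for any two distinct valuations μ ≠ ν into ([0,1],⊙), where ⊙ is the Łukasiewicz t-norm, there exists a formula α with μ(α) > 0 and ν(α) = 0. -/

import Mathlib

open Set

noncomputable section

/-- The real unit interval `[0,1]` as a subset of `ℝ`. -/
def I01 : Set ℝ := Set.Icc 0 1

/-- A continuous t-norm on `[0,1]`. -/
structure ContTNorm where
  mul : ℝ → ℝ → ℝ
  maps_to : ∀ x ∈ I01, ∀ y ∈ I01, mul x y ∈ I01
  continuousOn : ContinuousOn (fun p : ℝ × ℝ => mul p.1 p.2) (I01 ×ˢ I01)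
  assoc : ∀ x ∈ I01, ∀ y ∈ I01, ∀ z ∈ I01, mul (mul x y) z = mul x (mul y z)
  comm : ∀ x ∈ I01, ∀ y ∈ I01, mul x y = mul y x
  mono : ∀ a ∈ I01, ∀ b ∈ I01, ∀ c ∈ I01, b ≤ c → mul a b ≤ mul a c
  one_mul' : ∀ x ∈ I01, mul 1 x = x

/-- The residuum of a t-norm: `x →* y := sup { c ∈ [0,1] | x * c ≤ y }`. -/
def resid (t : ContTNorm) (x y : ℝ) : ℝ :=
  sSup {c | c ∈ I01 ∧ t.mul x c ≤ y}

/-- An algebra of truth values for the t-norm `t`: a subset of `[0,1]` containing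
`0` and `1` and closed under `t.mul` and its residuum. -/
structure TruthAlg (t : ContTNorm) where
  carrier : Set ℝ
  subset : carrier ⊆ I01
  zero_mem : (0:ℝ) ∈ carrier
  one_mem : (1:ℝ) ∈ carrier
  mul_mem : ∀ x ∈ carrier, ∀ y ∈ carrier, t.mul x y ∈ carrier
  resid_mem : ∀ x ∈ carrier, ∀ y ∈ carrier, resid t x y ∈ carrier

/-- Propositional formulas over countably many variables with `&`, `→`, `⊥`. -/
inductive Formula : Type
  | var : ℕ → Formula
  | bot : Formula
  | conj : Formula → Formula → Formula
  | impl : Formula → Formula → Formula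

/-- `α ↔ β := (α → β) & (β → α)`. -/
def Formula.iff (a b : Formula) : Formula := .conj (.impl a b) (.impl b a)

/-- The valuation determined by an assignment `v` of reals to the variables. -/
def eval (t : ContTNorm) (v : ℕ → ℝ) : Formula → ℝ
  | .var i => v i
  | .bot => 0
  | .conj a b => t.mul (eval t v a) (eval t v b)
  | .impl a b => resid t (eval t v a) (eval t v b)

/-- A valuation into `(T, t)` is (identified with) an assignment of values of `T`
to the propositional variables. -/
def IsValuation (t : ContTNorm) (T : TruthAlg t) (v : ℕ → ℝ) : Prop :=
  ∀ i, v i ∈ T.carrier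

/-- The logic induced by `(T, t)`: all formulas true to degree 1 under every valuation. -/
def Taut (t : ContTNorm) (T : TruthAlg t) : Set Formula :=
  {α | ∀ v : ℕ → ℝ, IsValuation t T v → eval t v α = 1}

/-- Principle P1. -/
def P1 (L : Set Formula) : Prop :=
  ∀ (t : ContTNorm) (T : TruthAlg t), Taut t T = L →
    ∀ α β : Formula,
      (Formula.iff α β ∈ L ↔
        ∀ v : ℕ → ℝ, IsValuation t T v → (eval t v α = 1 ↔ eval t v β = 1))

/-- Principle P2. -/
def P2 (L : Set Formula) : Prop :=
  ∀ (t : ContTNorm) (T : TruthAlg t), Taut t T = L →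
    ∀ v w : ℕ → ℝ, IsValuation t T v → IsValuation t T w → v ≠ w →
      ∃ α : Formula, 0 < eval t v α ∧ eval t w α = 0

/-- The Gödel t-norm: minimum. -/
def minT : ContTNorm where
  mul := fun x y => min x y
  maps_to := by
    rintro x ⟨hx0, hx1⟩ y ⟨hy0, hy1⟩
    exact ⟨le_min hx0 hy0, min_le_of_left_le hx1⟩
  continuousOn := (continuous_fst.min continuous_snd).continuousOn
  assoc := fun x _ y _ z _ => min_assoc x y z
  comm := fun x _ y _ => min_comm x y
  mono := fun a _ b _ c _ h => min_le_min le_rfl h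
  one_mul' := by rintro x ⟨hx0, hx1⟩; exact min_eq_right hx1

/-- The Łukasiewicz t-norm: `x ⊙ y = max 0 (x + y - 1)`. -/
def lukT : ContTNorm where
  mul := fun x y => max 0 (x + y - 1)
  maps_to := by
    rintro x ⟨hx0, hx1⟩ y ⟨hy0, hy1⟩
    exact ⟨le_max_left _ _, max_le zero_le_one (by linarith)⟩
  continuousOn :=
    (continuous_const.max ((continuous_fst.add continuous_snd).sub continuous_const)).continuousOn
  assoc := by
    rintro x ⟨hx0, hx1⟩ y ⟨hy0, hy1⟩ z ⟨hz0, hz1⟩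
    simp only [max_def]
    split_ifs <;> linarith
  comm := by intro x _ y _; rw [add_comm]
  mono := by
    rintro a _ b _ c _ h
    exact max_le_max le_rfl (by linarith)
  one_mul' := by
    rintro x ⟨hx0, hx1⟩
    rw [show (1:ℝ) + x - 1 = x by ring, max_eq_right hx0]

/-- The product t-norm: ordinary multiplication. -/
def prodT : ContTNorm where
  mul := fun x y => x * y
  maps_to := by
    rintro x ⟨hx0, hx1⟩ y ⟨hy0, hy1⟩
    exact ⟨mul_nonneg hx0 hy0, by nlinarith⟩
  continuousOn := (continuous_fst.mul continuous_snd).continuousOn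
  assoc := fun x _ y _ z _ => mul_assoc x y z
  comm := fun x _ y _ => mul_comm x y
  mono := by rintro a ⟨ha0, _⟩ b _ c _ h; exact mul_le_mul_of_nonneg_left h ha0
  one_mul' := fun x _ => one_mul x

lemma ContTNorm.mul_zero' (t : ContTNorm) {x : ℝ} (hx : x ∈ I01) : t.mul x 0 = 0 := by
  have h01 : (0:ℝ) ∈ I01 := ⟨le_rfl, zero_le_one⟩
  have h11 : (1:ℝ) ∈ I01 := ⟨zero_le_one, le_rfl⟩
  have h1 : t.mul x 0 = t.mul 0 x := t.comm x hx 0 h01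
  have h2 : t.mul 0 x ≤ t.mul 0 1 := t.mono 0 h01 x hx 1 h11 hx.2
  have h3 : t.mul 0 1 = t.mul 1 0 := t.comm 0 h01 1 h11
  have h4 : t.mul 1 0 = 0 := t.one_mul' 0 h01
  have h5 : t.mul x 0 ∈ I01 := t.maps_to x hx 0 h01
  rw [h3, h4] at h2
  rw [h1] at h5 ⊢
  exact le_antisymm h2 h5.1

lemma resid_mem_I01 (t : ContTNorm) {x y : ℝ} (hx : x ∈ I01) (hy : y ∈ I01) :
    resid t x y ∈ I01 := by
  have h01 : (0:ℝ) ∈ I01 := ⟨le_rfl, zero_le_one⟩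
  have h0 : (0:ℝ) ∈ {c | c ∈ I01 ∧ t.mul x c ≤ y} :=
    ⟨h01, by rw [t.mul_zero' hx]; exact hy.1⟩
  have hbdd : BddAbove {c | c ∈ I01 ∧ t.mul x c ≤ y} := ⟨1, fun c hc => hc.1.2⟩
  constructor
  · exact le_csSup hbdd h0
  · exact csSup_le ⟨0, h0⟩ fun c hc => hc.1.2

/-- The full algebra of truth values `[0,1]` for a t-norm `t`. -/
def fullAlg (t : ContTNorm) : TruthAlg t where
  carrier := I01
  subset := le_rfl
  zero_mem := ⟨le_rfl, zero_le_one⟩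
  one_mem := ⟨zero_le_one, le_rfl⟩
  mul_mem := t.maps_to
  resid_mem := fun _ hx _ hy => resid_mem_I01 t hx hy

lemma resid_eq_one_of_le (t : ContTNorm) {x y : ℝ} (hx : x ∈ I01) (hy : y ∈ I01)
    (hxy : x ≤ y) : resid t x y = 1 := by
  have h11 : (1:ℝ) ∈ I01 := ⟨zero_le_one, le_rfl⟩
  have hmul : t.mul x 1 = x := by rw [t.comm x hx 1 h11]; exact t.one_mul' x hx
  have h1 : (1:ℝ) ∈ {c | c ∈ I01 ∧ t.mul x c ≤ y} := ⟨h11, by rw [hmul]; exact hxy⟩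
  have hbdd : BddAbove {c | c ∈ I01 ∧ t.mul x c ≤ y} := ⟨1, fun c hc => hc.1.2⟩
  exact le_antisymm (csSup_le ⟨1, h1⟩ fun c hc => hc.1.2) (le_csSup hbdd h1)

lemma resid_one_zero (t : ContTNorm) : resid t 1 0 = 0 := by
  have : {c | c ∈ I01 ∧ t.mul 1 c ≤ 0} = {0} := by
    ext c
    constructor
    · rintro ⟨hc, hle⟩
      have := t.one_mul' c hc
      have := hc.1
      simp only [Set.mem_singleton_iff]
      linarith [this, (t.one_mul' c hc) ▸ hle]
    · rintro rfl
      exact ⟨⟨le_rfl, zero_le_one⟩, by rw [t.mul_zero' ⟨zero_le_one, le_rfl⟩]⟩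
  rw [resid, this, csSup_singleton]

/-- The two-element algebra of truth values `{0,1}`. -/
def boolAlg (t : ContTNorm) : TruthAlg t where
  carrier := {0, 1}
  subset := by
    rintro x (rfl | rfl)
    · exact ⟨le_rfl, zero_le_one⟩
    · exact ⟨zero_le_one, le_rfl⟩
  zero_mem := Or.inl rfl
  one_mem := Or.inr rfl
  mul_mem := by
    have h01 : (0:ℝ) ∈ I01 := ⟨le_rfl, zero_le_one⟩
    have h11 : (1:ℝ) ∈ I01 := ⟨zero_le_one, le_rfl⟩
    rintro x (rfl | rfl) y (rfl | rfl)
    · exact Or.inl (t.mul_zero' h01)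
    · exact Or.inl (by rw [t.comm 0 h01 1 h11]; exact t.mul_zero' h11)
    · exact Or.inl (t.mul_zero' h11)
    · exact Or.inr (t.one_mul' 1 h11)
  resid_mem := by
    have h01 : (0:ℝ) ∈ I01 := ⟨le_rfl, zero_le_one⟩
    have h11 : (1:ℝ) ∈ I01 := ⟨zero_le_one, le_rfl⟩
    rintro x (rfl | rfl) y (rfl | rfl)
    · exact Or.inr (resid_eq_one_of_le t h01 h01 le_rfl)
    · exact Or.inr (resid_eq_one_of_le t h01 h11 zero_le_one)
    · exact Or.inl (resid_one_zero t)
    · exact Or.inr (resid_eq_one_of_le t h11 h11 le_rfl)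

/-- Classical logic: the logic induced by the two-element algebra `{0,1}`
(this is independent of the chosen continuous t-norm). -/
def ClassicalLogic : Set Formula := Taut minT (boolAlg minT)


lemma luk_mul_eq (x y : ℝ) : lukT.mul x y = max 0 (x + y - 1) := rfl

lemma eval_mem_I01 (v : ℕ → ℝ) (hv : ∀ i, v i ∈ I01) : ∀ φ, eval lukT v φ ∈ I01
  | .var i => hv i
  | .bot => ⟨le_rfl, zero_le_one⟩
  | .conj a b => lukT.maps_to _ (eval_mem_I01 v hv a) _ (eval_mem_I01 v hv b)
  | .impl a b => resid_mem_I01 lukT (eval_mem_I01 v hv a) (eval_mem_I01 v hv b)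

lemma luk_resid_zero (x : ℝ) (hx : x ∈ I01) : resid lukT x 0 = 1 - x := by
  have hset : {c | c ∈ I01 ∧ lukT.mul x c ≤ 0} = Set.Icc 0 (1 - x) := by
    ext c
    simp only [Set.mem_setOf_eq, Set.mem_Icc, I01, luk_mul_eq]
    constructor
    · rintro ⟨⟨h0, h1⟩, hle⟩
      have h2 : x + c - 1 ≤ 0 := (max_le_iff.mp hle).2
      exact ⟨h0, by linarith⟩
    · rintro ⟨h0, h1⟩
      exact ⟨⟨h0, by linarith [hx.1]⟩, max_le le_rfl (by linarith)⟩
  rw [resid, hset, csSup_Icc (by linarith [hx.2])]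

/-- Squaring: `g(x) = max 0 (2x - 1)`. -/
def Gf (φ : Formula) : Formula := .conj φ φ

/-- Doubling: `d(x) = min 1 (2x)`. -/
def Df (φ : Formula) : Formula :=
  .impl (.conj (.impl φ .bot) (.impl φ .bot)) .bot

lemma eval_Gf (v : ℕ → ℝ) (φ : Formula) :
    eval lukT v (Gf φ) = max 0 (2 * eval lukT v φ - 1) := by
  show lukT.mul _ _ = _
  rw [luk_mul_eq]; ring_nf

lemma eval_Df (v : ℕ → ℝ) (hv : ∀ i, v i ∈ I01) (φ : Formula) :
    eval lukT v (Df φ) = min 1 (2 * eval lukT v φ) := by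
  have hx := eval_mem_I01 v hv φ
  set x := eval lukT v φ with hxdef
  show resid lukT (lukT.mul (resid lukT x 0) (resid lukT x 0)) 0 = _
  rw [luk_resid_zero x hx, luk_mul_eq]
  have h1 : max 0 (1 - x + (1 - x) - 1) = max 0 (1 - 2 * x) := by ring_nf
  rw [h1, luk_resid_zero _ ⟨le_max_left _ _, max_le zero_le_one (by linarith [hx.1])⟩]
  rcases le_total (2 * x) 1 with h | h
  · rw [max_eq_right (by linarith), min_eq_right h]; ring
  · rw [max_eq_left (by linarith), min_eq_left h]; ring

lemma eval_Gf_iter (v : ℕ → ℝ) (hv : ∀ i, v i ∈ I01) (φ : Formula) :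
    ∀ k : ℕ, eval lukT v (Gf^[k] φ) = max 0 (1 - 2 ^ k * (1 - eval lukT v φ)) := by
  intro k
  induction k with
  | zero =>
      have hx := eval_mem_I01 v hv φ
      simp only [Function.iterate_zero, id_eq, pow_zero, one_mul]
      rw [max_eq_right (by linarith [hx.1])]; ring
  | succ k ih =>
      rw [Function.iterate_succ_apply', eval_Gf, ih]
      set x := eval lukT v φ
      have hp : (2:ℝ) ^ (k + 1) * (1 - x) = 2 * (2 ^ k * (1 - x)) := by
        rw [pow_succ]; ring
      rcases le_total (1 - 2 ^ k * (1 - x)) 0 with h | h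
      · rw [max_eq_left h, max_eq_left (by linarith),
          max_eq_left (by linarith)]
      · rw [max_eq_right h]
        have h2 : 2 * (1 - 2 ^ k * (1 - x)) - 1 = 1 - 2 ^ (k + 1) * (1 - x) := by
          rw [hp]; ring
        rw [h2]

lemma key : ∀ n : ℕ, ∀ v w : ℕ → ℝ, (∀ i, v i ∈ I01) → (∀ i, w i ∈ I01) →
    ∀ φ : Formula, eval lukT w φ < eval lukT v φ →
    1 < 2 ^ n * (eval lukT v φ - eval lukT w φ) →
    ∃ α : Formula, eval lukT v α = 1 ∧ eval lukT w α = 0 := by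
  intro n
  induction n with
  | zero =>
      intro v w hv hw φ hlt hgap
      have ha := eval_mem_I01 v hv φ
      have hb := eval_mem_I01 w hw φ
      simp only [pow_zero, one_mul] at hgap
      linarith [ha.2, hb.1]
  | succ n ih =>
      intro v w hv hw φ hlt hgap
      set a := eval lukT v φ with hadef
      set b := eval lukT w φ with hbdef
      have ha := eval_mem_I01 v hv φ
      have hb := eval_mem_I01 w hw φ
      rcases le_or_gt (1 / 2 : ℝ) b with hb2 | hb2
      · -- apply Gf : values become 2a-1, 2b-1
        refine ih v w hv hw (Gf φ) ?_ ?_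
        · rw [eval_Gf, eval_Gf, ← hadef, ← hbdef,
            max_eq_right (by linarith), max_eq_right (by linarith)]
          linarith
        · rw [eval_Gf, eval_Gf, ← hadef, ← hbdef,
            max_eq_right (by linarith), max_eq_right (by linarith)]
          have hp : (2:ℝ) ^ n * (2 * a - 1 - (2 * b - 1)) = 2 ^ (n + 1) * (a - b) := by
            rw [pow_succ]; ring
          linarith
      · rcases le_or_gt (2 * a) 1 with ha2 | ha2
        · -- apply Df : values become 2a, 2b
          refine ih v w hv hw (Df φ) ?_ ?_
          · rw [eval_Df v hv, eval_Df w hw, ← hadef, ← hbdef,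
              min_eq_right ha2, min_eq_right (by linarith)]
            linarith
          · rw [eval_Df v hv, eval_Df w hw, ← hadef, ← hbdef,
              min_eq_right ha2, min_eq_right (by linarith)]
            have hp : (2:ℝ) ^ n * (2 * a - 2 * b) = 2 ^ (n + 1) * (a - b) := by
              rw [pow_succ]; ring
            linarith
        · -- Df sends a to 1, b to 2b < 1; finish with iterated Gf
          have hdv : eval lukT v (Df φ) = 1 := by
            rw [eval_Df v hv, ← hadef, min_eq_left (by linarith)]
          have hdw : eval lukT w (Df φ) = 2 * b := by
            rw [eval_Df w hw, ← hbdef, min_eq_right (by linarith)]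
          have hpos : 0 < 1 - 2 * b := by linarith
          obtain ⟨k, hk⟩ := pow_unbounded_of_one_lt (1 / (1 - 2 * b))
            (by norm_num : (1:ℝ) < 2)
          have hk' : 1 ≤ 2 ^ k * (1 - 2 * b) := by
            rw [div_lt_iff₀ hpos] at hk
            linarith
          refine ⟨Gf^[k] (Df φ), ?_, ?_⟩
          · rw [eval_Gf_iter v hv, hdv]
            simp
          · rw [eval_Gf_iter w hw, hdw, max_eq_left (by linarith)]

/-- Łukasiewicz logic satisfies P2 over its standard algebra: any two distinct
valuations into `([0,1], ⊙)` are separated by some formula. -/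
theorem Lukasiewicz_separates (v w : ℕ → ℝ) (hv : ∀ i, v i ∈ I01)
    (hw : ∀ i, w i ∈ I01) (hvw : v ≠ w) :
    ∃ α : Formula, 0 < eval lukT v α ∧ eval lukT w α = 0 := by
  obtain ⟨i, hi⟩ := Function.ne_iff.mp hvw
  have sep : ∀ (v' w' : ℕ → ℝ), (∀ j, v' j ∈ I01) → (∀ j, w' j ∈ I01) →
      w' i < v' i → ∃ α, eval lukT v' α = 1 ∧ eval lukT w' α = 0 := by
    intro v' w' hv' hw' hlt
    have hpos : 0 < v' i - w' i := by linarith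
    obtain ⟨n, hn⟩ := pow_unbounded_of_one_lt (1 / (v' i - w' i))
      (by norm_num : (1:ℝ) < 2)
    have hn' : 1 < 2 ^ n * (v' i - w' i) := by
      rw [div_lt_iff₀ hpos] at hn; linarith
    exact key n v' w' hv' hw' (.var i) hlt hn'
  rcases lt_or_gt_of_ne hi with h | h
  · -- v i < w i : separate the other way and negate
    obtain ⟨β, hβ1, hβ0⟩ := sep w v hw hv h
    refine ⟨.impl β .bot, ?_, ?_⟩
    · show 0 < resid lukT (eval lukT v β) 0
      rw [hβ0, luk_resid_zero 0 ⟨le_rfl, zero_le_one⟩]; norm_num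
    · show resid lukT (eval lukT w β) 0 = 0
      rw [hβ1, luk_resid_zero 1 ⟨zero_le_one, le_rfl⟩]; norm_num
  · obtain ⟨α, h1, h0⟩ := sep v w hv hw h
    exact ⟨α, by rw [h1]; norm_num, h0⟩

end
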